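/- Let 𝒰 be an ultrafilter on ℕ and let p : ℕ → ℕ be a sequence of prime numbers which is an infinite prime relative to 𝒰 (i.e. for every natural number q the set {m | p m = q} is not in 𝒰). Then, taking the field structure on the quotient K = (∏_{m∈ℕ} ℤ) ⧸ (p,𝒰) coming from the maximality of the ideal (p,𝒰), the algebraic closure of K is isomorphic, as a ring, to the field ℂ of complex numbers. -/

import Mathlib

/-- The ideal `(p, 𝒰)` of the product ring `∏_{m ∈ ℕ} ℤ`, consisting of all `a` such that
`{m | p m ∣ a m} ∈ 𝒰`. -/
def pUIdeal (𝒰 : Ultrafilter ℕ) (p : ℕ → ℕ) : Ideal (ℕ → ℤ) where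
  carrier := {a | {m | (p m : ℤ) ∣ a m} ∈ 𝒰}
  zero_mem' := by
    simp only [Set.mem_setOf_eq, Pi.zero_apply, dvd_zero, Set.setOf_true]
    exact Filter.univ_mem
  add_mem' := by
    intro a b ha hb
    have := Filter.inter_mem ha hb
    refine Filter.mem_of_superset this ?_
    rintro m ⟨h1, h2⟩
    exact dvd_add h1 h2
  smul_mem' := by
    intro c a ha
    refine Filter.mem_of_superset ha ?_
    intro m hm
    exact Dvd.dvd.mul_left hm (c m)


lemma pU_mem_iff (𝒰 : Ultrafilter ℕ) (p : ℕ → ℕ) (a : ℕ → ℤ) :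
    a ∈ pUIdeal 𝒰 p ↔ {m | (p m : ℤ) ∣ a m} ∈ 𝒰 := Iff.rfl

/-- If `p` is 𝒰-infinite then `p` is eventually large along `𝒰`. -/
lemma pU_big (𝒰 : Ultrafilter ℕ) (p : ℕ → ℕ) (hinf : ∀ q : ℕ, {m | p m = q} ∉ 𝒰)
    (c : ℕ) : {m | c ≤ p m} ∈ 𝒰 := by
  have h : (⋂ q ∈ Finset.range c, {m | p m = q}ᶜ) ∈ 𝒰 := by
    refine (Filter.biInter_finset_mem _).2 fun q _ => ?_
    exact (Ultrafilter.compl_mem_iff_notMem).2 (hinf q)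
  refine Filter.mem_of_superset h ?_
  intro m hm
  simp only [Set.mem_iInter, Set.mem_compl_iff, Set.mem_setOf_eq, Finset.mem_range] at hm
  show c ≤ p m
  by_contra hc
  push_neg at hc
  exact hm (p m) hc rfl

/-- The binary-digits family of elements used to embed `2^ℕ` into the residue field. -/
def pUG (α : ℕ → Bool) (c N : ℕ) : ℕ :=
  ∑ j ∈ Finset.range N, if 2 ^ (j + 1) ≤ c ∧ α j = true then 2 ^ j else 0

lemma pUG_succ (α : ℕ → Bool) (c N : ℕ) :
    pUG α c (N + 1) = pUG α c N + (if 2 ^ (N + 1) ≤ c ∧ α N = true then 2 ^ N else 0) := by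
  rw [pUG, Finset.sum_range_succ, ← pUG]

lemma pUG_lt_two_pow (α : ℕ → Bool) (c N : ℕ) : pUG α c N < 2 ^ N := by
  induction N with
  | zero => simp [pUG]
  | succ N ih =>
    rw [pUG, Finset.sum_range_succ, ← pUG]
    have : (if 2 ^ (N + 1) ≤ c ∧ α N = true then 2 ^ N else 0) ≤ 2 ^ N := by
      split <;> simp
    calc pUG α c N + _ ≤ pUG α c N + 2 ^ N := by omega
    _ < 2 ^ N + 2 ^ N := by omega
    _ = 2 ^ (N + 1) := by ring

lemma pUG_lt (α : ℕ → Bool) (c N : ℕ) (hc : 0 < c) : pUG α c N < c := by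
  induction N with
  | zero => simpa [pUG]
  | succ N ih =>
    rw [pUG, Finset.sum_range_succ, ← pUG]
    by_cases h : 2 ^ (N + 1) ≤ c ∧ α N = true
    · rw [if_pos h]
      have := pUG_lt_two_pow α c N
      have : pUG α c N + 2 ^ N < 2 ^ (N + 1) := by
        have : (2:ℕ) ^ (N+1) = 2 ^ N + 2 ^ N := by ring
        omega
      omega
    · rw [if_neg h]; simpa using ih

/-- Truncation mod 2^(i+1). -/
lemma pUG_modEq (α : ℕ → Bool) (c N i : ℕ) (hN : i + 1 ≤ N) :
    pUG α c N ≡ pUG α c (i + 1) [MOD 2 ^ (i + 1)] := by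
  have hsplit : pUG α c N = pUG α c (i + 1) +
      ∑ j ∈ Finset.Ico (i + 1) N, (if 2 ^ (j + 1) ≤ c ∧ α j = true then 2 ^ j else 0) := by
    rw [pUG, pUG, Finset.range_eq_Ico, Finset.range_eq_Ico]
    exact (Finset.sum_Ico_consecutive (fun j => if 2 ^ (j + 1) ≤ c ∧ α j = true then 2 ^ j else 0) (Nat.zero_le _) hN).symm
  have hdvd : 2 ^ (i + 1) ∣ ∑ j ∈ Finset.Ico (i + 1) N,
      (if 2 ^ (j + 1) ≤ c ∧ α j = true then 2 ^ j else 0) := by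
    refine Finset.dvd_sum fun j hj => ?_
    have hij : i + 1 ≤ j := (Finset.mem_Ico.1 hj).1
    split
    · exact pow_dvd_pow 2 hij
    · exact dvd_zero _
  rw [hsplit]
  exact (Nat.modEq_iff_dvd' (Nat.le_add_right _ _)).2 (by simpa using hdvd) |>.symm

lemma pU_injective (𝒰 : Ultrafilter ℕ) (p : ℕ → ℕ) (hp : ∀ m, (p m).Prime)
    (hinf : ∀ q : ℕ, {m | p m = q} ∉ 𝒰) :
    Function.Injective (fun α : ℕ → Bool =>
      Ideal.Quotient.mk (pUIdeal 𝒰 p) (fun m => ((pUG α (p m) (p m) : ℤ)))) := by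
  intro α β h
  by_contra hne
  have hex : ∃ i, α i ≠ β i := by
    by_contra h'; push_neg at h'; exact hne (funext h')
  set i := Nat.find hex with hidef
  have hi : α i ≠ β i := Nat.find_spec hex
  have hmin : ∀ j < i, α j = β j := fun j hj => by
    have := Nat.find_min hex hj
    simpa using this
  have hmem : (fun m => ((pUG α (p m) (p m) : ℤ)))
      - (fun m => ((pUG β (p m) (p m) : ℤ))) ∈ pUIdeal 𝒰 p := (Ideal.Quotient.eq).1 h
  rw [pU_mem_iff] at hmem
  have hbig := pU_big 𝒰 p hinf (2 ^ (i + 1))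
  obtain ⟨m, hm⟩ := Ultrafilter.nonempty_of_mem (Filter.inter_mem hmem hbig)
  obtain ⟨hm1, hm2⟩ := hm
  have hm1' : (p m : ℤ) ∣ (pUG α (p m) (p m) : ℤ) - (pUG β (p m) (p m) : ℤ) := hm1
  have hm2' : 2 ^ (i + 1) ≤ p m := hm2
  have hpm : 0 < p m := (hp m).pos
  have hlt1 := pUG_lt α (p m) (p m) hpm
  have hlt2 := pUG_lt β (p m) (p m) hpm
  have heq : pUG α (p m) (p m) = pUG β (p m) (p m) := by
    have h0 : (pUG α (p m) (p m) : ℤ) - (pUG β (p m) (p m) : ℤ) = 0 := by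
      refine Int.eq_zero_of_abs_lt_dvd hm1' ?_
      rw [abs_lt]
      constructor <;> omega
    have := sub_eq_zero.1 h0
    exact_mod_cast this
  have hle : i + 1 ≤ p m := le_trans (Nat.lt_two_pow_self (n := i + 1)).le hm2'
  have h1 := pUG_modEq α (p m) (p m) i hle
  have h2 := pUG_modEq β (p m) (p m) i hle
  have hmod : pUG α (p m) (i + 1) ≡ pUG β (p m) (i + 1) [MOD 2 ^ (i + 1)] :=
    h1.symm.trans (heq ▸ h2)
  have e1 : pUG α (p m) (i + 1) = pUG β (p m) (i + 1) := by
    have l1 := pUG_lt_two_pow α (p m) (i + 1)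
    have l2 := pUG_lt_two_pow β (p m) (i + 1)
    unfold Nat.ModEq at hmod
    rwa [Nat.mod_eq_of_lt l1, Nat.mod_eq_of_lt l2] at hmod
  have hsame : pUG α (p m) i = pUG β (p m) i := by
    unfold pUG
    exact Finset.sum_congr rfl fun j hj => by
      rw [hmin j (Finset.mem_range.1 hj)]
  rw [pUG_succ, pUG_succ, hsame] at e1
  have e2 : (if 2 ^ (i + 1) ≤ p m ∧ α i = true then 2 ^ i else 0)
      = (if 2 ^ (i + 1) ≤ p m ∧ β i = true then 2 ^ i else 0) := by omega
  have hpow : (0:ℕ) < 2 ^ i := Nat.pow_pos (by norm_num)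
  cases hα : α i <;> cases hβ : β i <;> simp_all <;> exact absurd e1 (Nat.ne_of_lt (Nat.pow_pos (by norm_num)))

open Cardinal in
lemma pU_card (𝒰 : Ultrafilter ℕ) (p : ℕ → ℕ) (hp : ∀ m, (p m).Prime)
    (hinf : ∀ q : ℕ, {m | p m = q} ∉ 𝒰) :
    #((ℕ → ℤ) ⧸ pUIdeal 𝒰 p) = Cardinal.continuum := by
  refine le_antisymm ?_ ?_
  · calc #((ℕ → ℤ) ⧸ pUIdeal 𝒰 p) ≤ #(ℕ → ℤ) :=
        mk_le_of_surjective Ideal.Quotient.mk_surjective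
      _ = (#ℤ) ^ (#ℕ) := (power_def ℤ ℕ).symm
      _ = Cardinal.continuum := by rw [mk_int, mk_nat, aleph0_power_aleph0]
  · calc Cardinal.continuum = 2 ^ aleph0 := two_power_aleph0.symm
      _ = (#Bool) ^ (#ℕ) := by rw [mk_bool, mk_nat]
      _ = #(ℕ → Bool) := power_def Bool ℕ
      _ ≤ #((ℕ → ℤ) ⧸ pUIdeal 𝒰 p) := mk_le_of_injective (pU_injective 𝒰 p hp hinf)

lemma pU_charZero (𝒰 : Ultrafilter ℕ) (p : ℕ → ℕ) (hp : ∀ m, (p m).Prime)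
    (hinf : ∀ q : ℕ, {m | p m = q} ∉ 𝒰) :
    CharZero ((ℕ → ℤ) ⧸ pUIdeal 𝒰 p) := by
  constructor
  intro a b hab
  have hmk : ∀ n : ℕ, ((n : ((ℕ → ℤ) ⧸ pUIdeal 𝒰 p))) =
      Ideal.Quotient.mk (pUIdeal 𝒰 p) (fun _ => (n : ℤ)) := by
    intro n
    rw [← map_natCast (Ideal.Quotient.mk (pUIdeal 𝒰 p)) n]
    rfl
  rw [hmk a, hmk b, Ideal.Quotient.eq] at hab
  rw [pU_mem_iff] at hab
  have hbig := pU_big 𝒰 p hinf (a + b + 1)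
  obtain ⟨m, hm⟩ := Ultrafilter.nonempty_of_mem (Filter.inter_mem hab hbig)
  obtain ⟨hm1, hm2⟩ := hm
  have hm1' : (p m : ℤ) ∣ (a : ℤ) - b := hm1
  have hm2' : a + b + 1 ≤ p m := hm2
  have h0 : (a : ℤ) - b = 0 := by
    refine Int.eq_zero_of_abs_lt_dvd hm1' ?_
    rw [abs_lt]
    omega
  omega

/-- If `p` is an infinite prime relative to the ultrafilter `𝒰` (i.e. no value is taken on a set
belonging to `𝒰`), then the algebraic closure of the nonstandard residue field
`(∏ ℤ) ⧸ (p, 𝒰)` (a field since `(p, 𝒰)` is maximal) is isomorphic, as a ring, to `ℂ`. -/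
theorem algClosure_residueField_iso_complex (𝒰 : Ultrafilter ℕ) (p : ℕ → ℕ)
    (hp : ∀ m, (p m).Prime) (hinf : ∀ q : ℕ, {m | p m = q} ∉ 𝒰)
    (hmax : (pUIdeal 𝒰 p).IsMaximal) :
    haveI := hmax
    letI : Field ((ℕ → ℤ) ⧸ pUIdeal 𝒰 p) := Ideal.Quotient.field (pUIdeal 𝒰 p)
    Nonempty (AlgebraicClosure ((ℕ → ℤ) ⧸ pUIdeal 𝒰 p) ≃+* ℂ) := by
  haveI := hmax
  letI K : Type := (ℕ → ℤ) ⧸ pUIdeal 𝒰 p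
  letI : Field ((ℕ → ℤ) ⧸ pUIdeal 𝒰 p) := Ideal.Quotient.field (pUIdeal 𝒰 p)
  haveI : CharZero ((ℕ → ℤ) ⧸ pUIdeal 𝒰 p) := pU_charZero 𝒰 p hp hinf
  haveI : NoZeroSMulDivisors ((ℕ → ℤ) ⧸ pUIdeal 𝒰 p)
      (AlgebraicClosure ((ℕ → ℤ) ⧸ pUIdeal 𝒰 p)) :=
    inferInstance
  have hcard : (Cardinal.mk (AlgebraicClosure ((ℕ → ℤ) ⧸ pUIdeal 𝒰 p))) =
      Cardinal.continuum := by
    refine le_antisymm ?_ ?_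
    · refine (Algebra.IsAlgebraic.cardinalMk_le_max ((ℕ → ℤ) ⧸ pUIdeal 𝒰 p) _).trans ?_
      rw [pU_card 𝒰 p hp hinf]
      simp [Cardinal.aleph0_le_continuum]
    · rw [← pU_card 𝒰 p hp hinf]
      exact Cardinal.mk_le_of_injective
        (RingHom.injective (algebraMap ((ℕ → ℤ) ⧸ pUIdeal 𝒰 p)
          (AlgebraicClosure ((ℕ → ℤ) ⧸ pUIdeal 𝒰 p))))
  refine IsAlgClosed.ringEquiv_of_equiv_of_charZero ?_ ?_
  · rw [hcard]; exact Cardinal.aleph0_lt_continuum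
  · exact Cardinal.eq.1 (by rw [hcard, Cardinal.mk_complex])
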